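/- Quadratic alignment inequality on O(d)^{⊗n}: Let G, Ĝ ∈ O(d)^{⊗n} and let ĝ ∈ O(d) attain the minimum defining d(G,Ĝ), i.e. ‖Gĝ − Ĝ‖_F = d(G,Ĝ). Then ‖Ĝᵀ(Gĝ − Ĝ)‖_F ≤ (1/2)·d(G,Ĝ)². -/

import Mathlib

open Matrix BigOperators

noncomputable section
namespace GroupSync

variable {n d : ℕ}

/-- The positive semidefinite square root of a positive semidefinite matrix, as
`Matrix.PosSemidef.sqrt` was defined in older Mathlib. -/
def psdSqrtOld {m : Type*} [Fintype m] [DecidableEq m] {A : Matrix m m ℝ}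
    (hA : A.PosSemidef) : Matrix m m ℝ :=
  hA.isHermitian.eigenvectorUnitary.1 * diagonal ((↑) ∘ Real.sqrt ∘ hA.isHermitian.eigenvalues) *
    (star hA.isHermitian.eigenvectorUnitary : Matrix m m ℝ)

/-- Frobenius norm of a real matrix. -/
def frob {m k : Type*} [Fintype m] [Fintype k] (X : Matrix m k ℝ) : ℝ :=
  Real.sqrt (∑ i, ∑ j, (X i j) ^ 2)

/-- Spectral (operator) norm of a real matrix: the operator norm of the induced
linear map between Euclidean spaces. -/
def spec {m k : Type*} [Fintype m] [Fintype k] [DecidableEq k] (X : Matrix m k ℝ) : ℝ :=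
  ‖LinearMap.toContinuousLinearMap (Matrix.toEuclideanLin X)‖

/-- Nuclear norm: trace of the positive semidefinite square root of `X * Xᵀ`
(i.e. the sum of the singular values of `X`). -/
def nuclear {m k : Type*} [Fintype m] [Fintype k] [DecidableEq m] (X : Matrix m k ℝ) : ℝ :=
  (psdSqrtOld (Matrix.posSemidef_self_mul_conjTranspose X)).trace

/-- The positive semidefinite square root of `X * Xᵀ`. -/
def psdSqrtMulT {m k : Type*} [Fintype m] [Fintype k] [DecidableEq m] (X : Matrix m k ℝ) :
    Matrix m m ℝ :=
  psdSqrtOld (Matrix.posSemidef_self_mul_conjTranspose X)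

/-- Membership in the orthogonal group `O(d)`. -/
def IsOd (g : Matrix (Fin d) (Fin d) ℝ) : Prop :=
  gᵀ * g = 1 ∧ g * gᵀ = 1

/-- Membership in the special orthogonal group `SO(d)`. -/
def IsSOd (g : Matrix (Fin d) (Fin d) ℝ) : Prop :=
  IsOd g ∧ g.det = 1

/-- The `i`-th `d × d` block of an `nd × d` matrix. -/
def blk (X : Matrix (Fin n × Fin d) (Fin d) ℝ) (i : Fin n) : Matrix (Fin d) (Fin d) ℝ :=
  Matrix.of fun a b => X (i, a) b

/-- Membership in `O(d)^{⊗n}`: every `d × d` block is orthogonal. -/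
def OdN (G : Matrix (Fin n × Fin d) (Fin d) ℝ) : Prop :=
  ∀ i : Fin n, IsOd (blk G i)

/-- Membership in `SO(d)^{⊗n}`. -/
def SOdN (G : Matrix (Fin n × Fin d) (Fin d) ℝ) : Prop :=
  ∀ i : Fin n, IsSOd (blk G i)

/-- The `i`-th block column (an `nd × d` matrix) of an `nd × nd` matrix. -/
def bcol (M : Matrix (Fin n × Fin d) (Fin n × Fin d) ℝ) (i : Fin n) :
    Matrix (Fin n × Fin d) (Fin d) ℝ :=
  Matrix.of fun p b => M p (i, b)

/-- The `ij`-th `d × d` block of an `nd × nd` matrix. -/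
def dblk (M : Matrix (Fin n × Fin d) (Fin n × Fin d) ℝ) (i j : Fin n) :
    Matrix (Fin d) (Fin d) ℝ :=
  Matrix.of fun a b => M (i, a) (j, b)

/-- `G' ∈ T_α(G)` (where `Ct = C + α I`): `G' ∈ O(d)^{⊗n}` and each block `G'_i` is a
nearest point of `C̃ᵢᵀ G` in `O(d)` w.r.t. the Frobenius norm. -/
def InT (Ct : Matrix (Fin n × Fin d) (Fin n × Fin d) ℝ)
    (G G' : Matrix (Fin n × Fin d) (Fin d) ℝ) : Prop :=
  OdN G' ∧ ∀ i : Fin n, ∀ X : Matrix (Fin d) (Fin d) ℝ, IsOd X →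
    frob (blk G' i - (bcol Ct i)ᵀ * G) ≤ frob (X - (bcol Ct i)ᵀ * G)

/-- `G' ∈ ST_α(G)`: the `SO(d)` analogue of `InT`. -/
def InST (Ct : Matrix (Fin n × Fin d) (Fin n × Fin d) ℝ)
    (G G' : Matrix (Fin n × Fin d) (Fin d) ℝ) : Prop :=
  SOdN G' ∧ ∀ i : Fin n, ∀ X : Matrix (Fin d) (Fin d) ℝ, IsSOd X →
    frob (blk G' i - (bcol Ct i)ᵀ * G) ≤ frob (X - (bcol Ct i)ᵀ * G)

/-- The quotient distance `d(X, Y) = min_{g ∈ O(d)} ‖X − Y g‖_F`. -/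
def dOrth (X Y : Matrix (Fin n × Fin d) (Fin d) ℝ) : ℝ :=
  ⨅ g : {g : Matrix (Fin d) (Fin d) ℝ // IsOd g}, frob (X - Y * g.1)

/-- The objective function `f(G) = tr(Gᵀ C G)`. -/
def obj (C : Matrix (Fin n × Fin d) (Fin n × Fin d) ℝ)
    (G : Matrix (Fin n × Fin d) (Fin d) ℝ) : ℝ :=
  Matrix.trace (Gᵀ * C * G)

/-- Hadamard (entrywise) product. -/
def had {m k : Type*} (X Y : Matrix m k ℝ) : Matrix m k ℝ :=
  Matrix.of fun p q => X p q * Y p q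

/-- `W ⊗ (1_d 1_dᵀ)`, the Kronecker product of `W` with the all-ones `d × d` matrix. -/
def kron1 (W : Matrix (Fin n) (Fin n) ℝ) : Matrix (Fin n × Fin d) (Fin n × Fin d) ℝ :=
  Matrix.kroneckerMap (· * ·) W (Matrix.of fun (_ _ : Fin d) => (1 : ℝ))

/-- The all-ones matrix `1_m 1_mᵀ`. -/
def onesMat (m : Type*) : Matrix m m ℝ :=
  Matrix.of fun _ _ => (1 : ℝ)

/-- `symblockdiag`: symmetrize the diagonal `d × d` blocks, zero out all other blocks. -/
def sbd (X : Matrix (Fin n × Fin d) (Fin n × Fin d) ℝ) :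
    Matrix (Fin n × Fin d) (Fin n × Fin d) ℝ :=
  Matrix.of fun p q => if p.1 = q.1 then (X p q + X (p.1, q.2) (q.1, p.2)) / 2 else 0

/-- `S(G) = symblockdiag(C G Gᵀ) − C`. -/
def Smat (C : Matrix (Fin n × Fin d) (Fin n × Fin d) ℝ)
    (G : Matrix (Fin n × Fin d) (Fin d) ℝ) : Matrix (Fin n × Fin d) (Fin n × Fin d) ℝ :=
  sbd (C * (G * Gᵀ)) - C

/-- `G` is a second-order critical point of (QP): `S(G) G = 0` and
`⟨H, S(G) H⟩ ≥ 0` for all tangent directions `H` (blockwise `Hᵢ Gᵢᵀ` skew-symmetric). -/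
def IsSOC (C : Matrix (Fin n × Fin d) (Fin n × Fin d) ℝ)
    (G : Matrix (Fin n × Fin d) (Fin d) ℝ) : Prop :=
  Smat C G * G = 0 ∧
  ∀ H : Matrix (Fin n × Fin d) (Fin d) ℝ,
    (∀ i : Fin n, (blk H i * (blk G i)ᵀ)ᵀ = -(blk H i * (blk G i)ᵀ)) →
    0 ≤ Matrix.trace (Hᵀ * (Smat C G * H))

/-- Smallest singular value of a square matrix, as the minimum of `‖M v‖` over
unit vectors `v`. -/
def sigmaMin (M : Matrix (Fin d) (Fin d) ℝ) : ℝ :=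
  ⨅ v : {v : Fin d → ℝ // ∑ a, (v a) ^ 2 = 1}, Real.sqrt (∑ a, (M.mulVec v.1 a) ^ 2)

/-- The singular values of a square matrix: square roots of the eigenvalues of `Mᵀ M`. -/
def singVal (M : Matrix (Fin d) (Fin d) ℝ) (l : Fin d) : ℝ :=
  Real.sqrt ((show (Mᵀ * M).IsHermitian from
    Matrix.isHermitian_iff_isSymm.mpr (Matrix.isSymm_transpose_mul_self M)).eigenvalues l)

/-- Smallest eigenvalue of a (symmetric) matrix, as the minimum Rayleigh quotient
over unit vectors. -/
def lambdaMin {m : Type*} [Fintype m] (M : Matrix m m ℝ) : ℝ :=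
  ⨅ v : {v : m → ℝ // ∑ i, (v i) ^ 2 = 1}, v.1 ⬝ᵥ M.mulVec v.1

/-- `D_α(G)`: block diagonal of the psd square roots of `(C̃ᵢᵀ G)(C̃ᵢᵀ G)ᵀ`, minus `C̃`. -/
def Dmat (Ct : Matrix (Fin n × Fin d) (Fin n × Fin d) ℝ)
    (G : Matrix (Fin n × Fin d) (Fin d) ℝ) : Matrix (Fin n × Fin d) (Fin n × Fin d) ℝ :=
  (Matrix.of fun p q =>
    if p.1 = q.1 then psdSqrtMulT ((bcol Ct p.1)ᵀ * G) p.2 q.2 else 0) - Ct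

/-- The residual function `ρ_α(G) = ‖D_α(G) G‖_F`. -/
def rho (Ct : Matrix (Fin n × Fin d) (Fin n × Fin d) ℝ)
    (G : Matrix (Fin n × Fin d) (Fin d) ℝ) : ℝ :=
  frob (Dmat Ct G * G)

/-- Blockwise infinity norm: `‖X‖_∞ = max_i ‖X_i‖` (spectral norm of the blocks). -/
def binf (X : Matrix (Fin n × Fin d) (Fin d) ℝ) : ℝ :=
  ⨆ i : Fin n, spec (blk X i)


/-! ### Auxiliary lemmas for the quadratic alignment inequality -/

lemma frob_nonneg' {m k : Type*} [Fintype m] [Fintype k] (X : Matrix m k ℝ) : 0 ≤ frob X :=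
  Real.sqrt_nonneg _

lemma frob_sq' {m k : Type*} [Fintype m] [Fintype k] (X : Matrix m k ℝ) :
    frob X ^ 2 = ∑ i, ∑ j, (X i j) ^ 2 :=
  Real.sq_sqrt (Finset.sum_nonneg fun _ _ => Finset.sum_nonneg fun _ _ => sq_nonneg _)

lemma frob_sq_eq_trace' {m k : Type*} [Fintype m] [Fintype k] (X : Matrix m k ℝ) :
    frob X ^ 2 = Matrix.trace (Xᵀ * X) := by
  rw [frob_sq']
  simp only [Matrix.trace, Matrix.diag, Matrix.mul_apply, Matrix.transpose_apply, sq]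
  exact Finset.sum_comm ..

lemma frob_smul' {m k : Type*} [Fintype m] [Fintype k] (r : ℝ) (X : Matrix m k ℝ) :
    frob (r • X) = |r| * frob X := by
  unfold frob
  have h : ∑ i, ∑ j, ((r • X) i j) ^ 2 = r ^ 2 * ∑ i, ∑ j, (X i j) ^ 2 := by
    rw [Finset.mul_sum]
    refine Finset.sum_congr rfl fun i _ => ?_
    rw [Finset.mul_sum]
    refine Finset.sum_congr rfl fun j _ => ?_
    simp [mul_pow]
  rw [h, Real.sqrt_mul (sq_nonneg r), Real.sqrt_sq_eq_abs]

lemma frob_transpose_mul_self_le {m k : Type*} [Fintype m] [Fintype k] (X : Matrix m k ℝ) :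
    frob (Xᵀ * X) ≤ frob X ^ 2 := by
  have hT : frob X ^ 2 = ∑ a : k, ∑ p : m, (X p a) ^ 2 := by
    rw [frob_sq']; exact Finset.sum_comm ..
  have hTnn : 0 ≤ ∑ a : k, ∑ p : m, (X p a) ^ 2 :=
    Finset.sum_nonneg fun _ _ => Finset.sum_nonneg fun _ _ => sq_nonneg _
  rw [hT]
  unfold frob
  have hstep : ∑ a : k, ∑ b : k, ((Xᵀ * X) a b) ^ 2
      ≤ (∑ a : k, ∑ p : m, (X p a) ^ 2) ^ 2 := by
    have hentry : ∀ a b : k, ((Xᵀ * X) a b) ^ 2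
        ≤ (∑ p : m, (X p a) ^ 2) * (∑ p : m, (X p b) ^ 2) := by
      intro a b
      have : (Xᵀ * X) a b = ∑ p : m, X p a * X p b := by
        simp [Matrix.mul_apply, Matrix.transpose_apply]
      rw [this]
      exact Finset.sum_mul_sq_le_sq_mul_sq Finset.univ _ _
    calc ∑ a : k, ∑ b : k, ((Xᵀ * X) a b) ^ 2
        ≤ ∑ a : k, ∑ b : k, (∑ p : m, (X p a) ^ 2) * (∑ p : m, (X p b) ^ 2) :=
          Finset.sum_le_sum fun a _ => Finset.sum_le_sum fun b _ => hentry a b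
      _ = (∑ a : k, ∑ p : m, (X p a) ^ 2) ^ 2 := by
          rw [sq, Finset.sum_mul_sum]
  calc Real.sqrt (∑ a : k, ∑ b : k, ((Xᵀ * X) a b) ^ 2)
      ≤ Real.sqrt ((∑ a : k, ∑ p : m, (X p a) ^ 2) ^ 2) := Real.sqrt_le_sqrt hstep
    _ = _ := Real.sqrt_sq hTnn

lemma IsOd.mul' {g h : Matrix (Fin d) (Fin d) ℝ} (hg : IsOd g) (hh : IsOd h) :
    IsOd (g * h) := by
  constructor
  · rw [Matrix.transpose_mul, Matrix.mul_assoc, ← Matrix.mul_assoc gᵀ g h, hg.1,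
      Matrix.one_mul, hh.1]
  · rw [Matrix.transpose_mul, Matrix.mul_assoc, ← Matrix.mul_assoc h hᵀ gᵀ, hh.2,
      Matrix.one_mul, hg.2]

lemma IsOd.transpose' {g : Matrix (Fin d) (Fin d) ℝ} (hg : IsOd g) : IsOd gᵀ :=
  ⟨by rw [Matrix.transpose_transpose]; exact hg.2,
   by rw [Matrix.transpose_transpose]; exact hg.1⟩

lemma OdN_transpose_mul_self {G : Matrix (Fin n × Fin d) (Fin d) ℝ} (hG : OdN G) :
    Gᵀ * G = (n : ℝ) • 1 := by
  ext a b
  have hblk : ∀ i : Fin n,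
      ∑ p, G (i, p) a * G (i, p) b = (1 : Matrix (Fin d) (Fin d) ℝ) a b := by
    intro i
    have h : ((blk G i)ᵀ * blk G i) a b = ∑ p, G (i, p) a * G (i, p) b := by
      simp [Matrix.mul_apply, blk, Matrix.transpose_apply]
    rw [← h, (hG i).1]
  calc (Gᵀ * G) a b = ∑ i : Fin n, ∑ p : Fin d, G (i, p) a * G (i, p) b := by
        rw [Matrix.mul_apply, Fintype.sum_prod_type]
        simp [Matrix.transpose_apply]
    _ = ∑ _i : Fin n, (1 : Matrix (Fin d) (Fin d) ℝ) a b :=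
        Finset.sum_congr rfl fun i _ => hblk i
    _ = ((n : ℝ) • (1 : Matrix (Fin d) (Fin d) ℝ)) a b := by
        simp [Finset.sum_const, Matrix.smul_apply, nsmul_eq_mul]

lemma frob_mul_orth {m : Type*} [Fintype m] (X : Matrix m (Fin d) ℝ)
    {q : Matrix (Fin d) (Fin d) ℝ} (hq : IsOd q) : frob (X * q) = frob X := by
  have hsq : frob (X * q) ^ 2 = frob X ^ 2 := by
    rw [frob_sq_eq_trace', frob_sq_eq_trace', Matrix.transpose_mul]
    have hms : (X * q) * (qᵀ * Xᵀ) = X * Xᵀ := by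
      rw [Matrix.mul_assoc, ← Matrix.mul_assoc q qᵀ Xᵀ, hq.2, Matrix.one_mul]
    rw [Matrix.trace_mul_comm, hms, Matrix.trace_mul_comm]
  calc frob (X * q) = Real.sqrt (frob (X * q) ^ 2) := (Real.sqrt_sq (frob_nonneg' _)).symm
    _ = Real.sqrt (frob X ^ 2) := by rw [hsq]
    _ = frob X := Real.sqrt_sq (frob_nonneg' _)

/-- Shorthand for a real standard basis matrix. -/
def Ebm (a b : Fin d) : Matrix (Fin d) (Fin d) ℝ := Matrix.single a b 1

lemma Ebm_transpose (a b : Fin d) : (Ebm a b)ᵀ = Ebm b a := by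
  ext x y
  simp [Ebm, Matrix.single, Matrix.transpose_apply, and_comm]

/-- A Givens rotation (parametrized by a point on the unit circle). -/
def rotM (i j : Fin d) (c s : ℝ) : Matrix (Fin d) (Fin d) ℝ :=
  1 + (c - 1) • (Ebm i i + Ebm j j) + s • (Ebm j i - Ebm i j)

lemma rotM_transpose (i j : Fin d) (c s : ℝ) : (rotM i j c s)ᵀ = rotM i j c (-s) := by
  simp only [rotM, Matrix.transpose_add, Matrix.transpose_smul, Matrix.transpose_sub,
    Matrix.transpose_one, Ebm_transpose]
  module

lemma aux_rot_mul {A : Type*} [Ring A] [Algebra ℝ A] (P K : A) (hPP : P * P = P)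
    (hPK : P * K = K) (hKP : K * P = K) (hKK : K * K = -P) (c s c' s' : ℝ) :
    (1 + (c - 1) • P + s • K) * (1 + (c' - 1) • P + s' • K)
      = 1 + (c * c' - s * s' - 1) • P + (c * s' + s * c') • K := by
  simp only [add_mul, mul_add, smul_mul_assoc, mul_smul_comm, one_mul, mul_one,
    hPP, hPK, hKP, hKK, smul_smul, smul_neg]
  module

lemma rotM_mul {i j : Fin d} (hij : i ≠ j) (c s c' s' : ℝ) :
    rotM i j c s * rotM i j c' s' = rotM i j (c * c' - s * s') (c * s' + s * c') := by
  have hz : ∀ a b a' b' : Fin d, b ≠ a' → Ebm a b * Ebm a' b' = 0 := fun a b a' b' h =>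
    Matrix.single_mul_single_of_ne _ _ _ _ h _
  have hm : ∀ a b b' : Fin d, Ebm a b * Ebm b b' = Ebm a b' := fun a b b' => by
    simp only [Ebm, Matrix.single_mul_single_same, one_mul]
  have hPP : (Ebm i i + Ebm j j) * (Ebm i i + Ebm j j) = Ebm i i + Ebm j j := by
    rw [Matrix.add_mul, Matrix.mul_add, Matrix.mul_add, hm, hm, hz _ _ _ _ hij,
      hz _ _ _ _ hij.symm]
    abel
  have hPK : (Ebm i i + Ebm j j) * (Ebm j i - Ebm i j) = Ebm j i - Ebm i j := by
    rw [Matrix.add_mul, Matrix.mul_sub, Matrix.mul_sub, hm, hm, hz _ _ _ _ hij,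
      hz _ _ _ _ hij.symm]
    abel
  have hKP : (Ebm j i - Ebm i j) * (Ebm i i + Ebm j j) = Ebm j i - Ebm i j := by
    rw [Matrix.sub_mul, Matrix.mul_add, Matrix.mul_add, hm, hm, hz _ _ _ _ hij,
      hz _ _ _ _ hij.symm]
    abel
  have hKK : (Ebm j i - Ebm i j) * (Ebm j i - Ebm i j) = -(Ebm i i + Ebm j j) := by
    rw [Matrix.sub_mul, Matrix.mul_sub, Matrix.mul_sub, hm, hm, hz _ _ _ _ hij,
      hz _ _ _ _ hij.symm]
    abel
  rw [show rotM i j c s = 1 + (c - 1) • (Ebm i i + Ebm j j) + s • (Ebm j i - Ebm i j) from rfl,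
    show rotM i j c' s' = 1 + (c' - 1) • (Ebm i i + Ebm j j) + s' • (Ebm j i - Ebm i j) from rfl,
    aux_rot_mul _ _ hPP hPK hKP hKK]
  rw [rotM]

lemma rotM_one (i j : Fin d) : rotM i j 1 0 = 1 := by
  simp [rotM]

lemma rotM_isOd {i j : Fin d} (hij : i ≠ j) {c s : ℝ} (hcs : c ^ 2 + s ^ 2 = 1) :
    IsOd (rotM i j c s) := by
  have h1 : c * c - -s * s = 1 := by rw [← hcs]; ring
  have h2 : c * s + -s * c = 0 := by ring
  have h3 : c * c - s * -s = 1 := by rw [← hcs]; ring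
  have h4 : c * -s + s * c = 0 := by ring
  constructor
  · rw [rotM_transpose, rotM_mul hij, h1, h2, rotM_one]
  · rw [rotM_transpose, rotM_mul hij, h3, h4, rotM_one]

lemma trace_mul_Ebm (S : Matrix (Fin d) (Fin d) ℝ) (a b : Fin d) :
    Matrix.trace (S * Ebm a b) = S b a := by
  simp [Ebm, Matrix.trace, Matrix.diag, Matrix.mul_apply, Matrix.single, ite_and,
    mul_ite, mul_one, mul_zero]

lemma trace_mul_rotM (S : Matrix (Fin d) (Fin d) ℝ) (i j : Fin d) (c s : ℝ) :
    Matrix.trace (S * rotM i j c s)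
      = Matrix.trace S + (c - 1) * (S i i + S j j) + s * (S i j - S j i) := by
  simp only [rotM, Matrix.mul_add, Matrix.mul_sub, Matrix.mul_smul, Matrix.mul_one,
    Matrix.trace_add, Matrix.trace_sub, Matrix.trace_smul, trace_mul_Ebm, smul_eq_mul]

set_option maxHeartbeats 1600000 in
/-- quadratic alignment inequality on `O(d)^{⊗n}`.
Let `G, Ĝ ∈ O(d)^{⊗n}` and let `ĝ ∈ O(d)` attain the minimum defining `d(G, Ĝ)`,
i.e. `‖G ĝ − Ĝ‖_F = d(G, Ĝ)`. Then `‖Ĝᵀ (G ĝ − Ĝ)‖_F ≤ (1/2)·d(G, Ĝ)²`. -/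
theorem quadratic_alignment_inequality {n d : ℕ}
    (G Gh : Matrix (Fin n × Fin d) (Fin d) ℝ) (hG : OdN G) (hGh : OdN Gh)
    (g : Matrix (Fin d) (Fin d) ℝ) (hg : IsOd g)
    (hopt : frob (G * g - Gh) = dOrth G Gh) :
    frob (Ghᵀ * (G * g - Gh)) ≤ (1 / 2) * dOrth G Gh ^ 2 := by
  classical
  set Δ := G * g - Gh with hΔ
  set S := Ghᵀ * (G * g) with hS
  have hGt : Gᵀ * G = (n : ℝ) • 1 := OdN_transpose_mul_self hG
  have hGht : Ghᵀ * Gh = (n : ℝ) • 1 := OdN_transpose_mul_self hGh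
  -- expansion of the squared distance
  have expand : ∀ q : Matrix (Fin d) (Fin d) ℝ, IsOd q →
      frob (G * q - Gh) ^ 2
        = 2 * ((n : ℝ) * d) - 2 * Matrix.trace (Ghᵀ * (G * q)) := by
    intro q hq
    rw [frob_sq_eq_trace']
    have e1 : (G * q - Gh)ᵀ * (G * q - Gh)
        = qᵀ * (Gᵀ * G) * q - qᵀ * (Gᵀ * Gh) - Ghᵀ * (G * q) + Ghᵀ * Gh := by
      rw [Matrix.transpose_sub, Matrix.transpose_mul, Matrix.sub_mul, Matrix.mul_sub,
        Matrix.mul_sub]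
      simp only [Matrix.mul_assoc]
      abel
    rw [e1, hGt, hGht]
    have e2 : qᵀ * ((n : ℝ) • (1 : Matrix (Fin d) (Fin d) ℝ)) * q = (n : ℝ) • 1 := by
      rw [Matrix.mul_smul, Matrix.smul_mul, Matrix.mul_one, hq.1]
    rw [e2]
    have e3 : Matrix.trace (qᵀ * (Gᵀ * Gh)) = Matrix.trace (Ghᵀ * (G * q)) := by
      rw [← Matrix.trace_transpose (qᵀ * (Gᵀ * Gh))]
      congr 1
      rw [Matrix.transpose_mul, Matrix.transpose_mul, Matrix.transpose_transpose,
        Matrix.transpose_transpose, Matrix.mul_assoc]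
    rw [Matrix.trace_add, Matrix.trace_sub, Matrix.trace_sub, e3, Matrix.trace_smul,
      Matrix.trace_one]
    simp only [smul_eq_mul, Fintype.card_fin]
    ring
  -- optimality implies the trace inequality
  have key : ∀ h : Matrix (Fin d) (Fin d) ℝ, IsOd h →
      Matrix.trace (S * h) ≤ Matrix.trace S := by
    intro h hh
    have hgh : IsOd (g * h) := IsOd.mul' hg hh
    have hfr : frob (G * g - Gh) ≤ frob (G * (g * h) - Gh) := by
      rw [hopt]
      have hrw : frob (G * (g * h) - Gh) = frob (G - Gh * (g * h)ᵀ) := by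
        have hfac : G * (g * h) - Gh = (G - Gh * (g * h)ᵀ) * (g * h) := by
          rw [Matrix.sub_mul, Matrix.mul_assoc, hgh.1, Matrix.mul_one]
        rw [hfac, frob_mul_orth _ hgh]
      rw [hrw]
      have hb : BddBelow (Set.range fun p : {p : Matrix (Fin d) (Fin d) ℝ // IsOd p} =>
          frob (G - Gh * p.1)) := by
        refine ⟨0, ?_⟩
        rintro x ⟨p, rfl⟩
        exact frob_nonneg' _
      unfold dOrth
      exact ciInf_le hb ⟨(g * h)ᵀ, IsOd.transpose' hgh⟩
    have hsq := pow_le_pow_left₀ (frob_nonneg' _) hfr 2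
    rw [expand g hg, expand (g * h) hgh] at hsq
    have htr : Matrix.trace (Ghᵀ * (G * (g * h))) ≤ Matrix.trace (Ghᵀ * (G * g)) := by
      linarith
    calc Matrix.trace (S * h) = Matrix.trace (Ghᵀ * (G * (g * h))) := by
          simp only [hS, Matrix.mul_assoc]
      _ ≤ Matrix.trace S := htr
  -- symmetry of S
  have hsym : ∀ a b : Fin d, S a b = S b a := by
    intro a b
    rcases eq_or_ne a b with rfl | hab
    · rfl
    · set A := S a a + S b b with hA
      set B := S a b - S b a with hB
      have hrot : ∀ c s : ℝ, c ^ 2 + s ^ 2 = 1 → c * A + s * B ≤ A := by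
        intro c s hcs
        have h1 := key (rotM a b c s) (rotM_isOd hab hcs)
        rw [trace_mul_rotM] at h1
        rw [hA, hB]
        linarith
      by_contra hne
      have hBne : B ≠ 0 := sub_ne_zero.mpr hne
      have hB2 : 0 < B ^ 2 :=
        lt_of_le_of_ne (sq_nonneg B) (Ne.symm (pow_ne_zero 2 hBne))
      set r := Real.sqrt (A ^ 2 + B ^ 2) with hr
      have hApos : 0 < A ^ 2 + B ^ 2 := by positivity
      have hrpos : 0 < r := Real.sqrt_pos.mpr hApos
      have hr2 : r ^ 2 = A ^ 2 + B ^ 2 := Real.sq_sqrt hApos.le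
      have hcs : (A / r) ^ 2 + (B / r) ^ 2 = 1 := by
        field_simp
        linarith
      have h2 := hrot (A / r) (B / r) hcs
      rw [div_mul_eq_mul_div, div_mul_eq_mul_div, ← add_div,
        div_le_iff₀ hrpos] at h2
      -- h2 : A * A + B * B ≤ A * r
      have hAr : r ≤ A := by
        have hrr : r * r ≤ A * r := by nlinarith
        exact le_of_mul_le_mul_right hrr hrpos
      nlinarith
  have hSsym : Sᵀ = S := by
    ext a b
    rw [Matrix.transpose_apply]
    exact hsym b a
  -- the key algebraic identity
  have hSn : Ghᵀ * Δ = S - (n : ℝ) • 1 := by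
    rw [hΔ, Matrix.mul_sub, hGht, hS]
  have hDD : Δᵀ * Δ = ((2 * n : ℝ)) • 1 - (2 : ℝ) • S := by
    have e1 : Δᵀ * Δ = gᵀ * (Gᵀ * G) * g - (Ghᵀ * (G * g))ᵀ - Ghᵀ * (G * g) + Ghᵀ * Gh := by
      have ht : (Ghᵀ * (G * g))ᵀ = gᵀ * Gᵀ * Gh := by
        rw [Matrix.transpose_mul, Matrix.transpose_mul, Matrix.transpose_transpose]
      rw [hΔ, ht, Matrix.transpose_sub, Matrix.transpose_mul, Matrix.sub_mul,
        Matrix.mul_sub, Matrix.mul_sub]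
      simp only [Matrix.mul_assoc]
      abel
    have e2 : gᵀ * ((n : ℝ) • (1 : Matrix (Fin d) (Fin d) ℝ)) * g = (n : ℝ) • 1 := by
      rw [Matrix.mul_smul, Matrix.smul_mul, Matrix.mul_one, hg.1]
    rw [e1, hGt, hGht, e2, ← hS, hSsym]
    module
  have hkey : Ghᵀ * Δ = (-(1 / 2) : ℝ) • (Δᵀ * Δ) := by
    rw [hSn, hDD]
    module
  rw [hkey, frob_smul']
  rw [show |(-(1 / 2) : ℝ)| = 1 / 2 by norm_num]
  have h4 : frob (Δᵀ * Δ) ≤ frob Δ ^ 2 := frob_transpose_mul_self_le Δ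
  have h5 : frob Δ = dOrth G Gh := hopt
  calc (1 / 2) * frob (Δᵀ * Δ) ≤ (1 / 2) * frob Δ ^ 2 := by linarith
    _ = (1 / 2) * dOrth G Gh ^ 2 := by rw [h5]

end GroupSync
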